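/- Let n ≥ 2 and 2 ≤ p < n be integers. Then M_{p,D} = 0 in the group algebra for every positive integer D in each of the following situations: (i) p = 2, n even, and D < n/2; (ii) p = 2, n odd, and D < n; (iii) (n,p) = (5,3) and D ≤ 3; (iv) (n,p) = (8,3) and D ≤ 5; (v) (n,p) = (7,4) and D ≤ 3; (vi) p ≥ 3, (n,p) ∉ {(5,3),(8,3),(7,4)}, and D < min{D(s₁), D(s₂)}, where s₁ = ⌊n/p⌋, s₂ = ⌈n/p⌉ and D(s) = (|s·p − n| + 1)·s. -/

import Mathlib

open Finset

/-- The alternating sum `Ã(μ) = Σ_{σ ∈ S_n} sign(σ)·X^{σ·μ}` in the group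
algebra `AddMonoidAlgebra ℤ (Fin n → ℤ)`, where `(σ·μ)_i = μ_{σ⁻¹(i)}`. -/
noncomputable def Atilde (n : ℕ) (μ : Fin n → ℤ) : AddMonoidAlgebra ℤ (Fin n → ℤ) :=
  ∑ σ : Equiv.Perm (Fin n),
    (Equiv.Perm.sign σ : ℤ) • AddMonoidAlgebra.single (fun i => μ (σ⁻¹ i)) 1

/-- The staircase tuple `ρ̃ = (n−1, n−2, …, 1, 0)`. -/
def rhoT (n : ℕ) : Fin n → ℤ := fun i => (n : ℤ) - 1 - (i : ℤ)

/-- `Ã_{a,b} = Σ Ã(ρ̃ − a(e_u − e_v))` over ordered pairs `u ≠ v` with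
`v − u = a − b` (the roots of `sl_n` of height `a − b`). -/
noncomputable def AtildeAB (n : ℕ) (a b : ℕ) : AddMonoidAlgebra ℤ (Fin n → ℤ) :=
  ∑ uv : Fin n × Fin n,
    if uv.1 ≠ uv.2 ∧ ((uv.2 : ℤ) - (uv.1 : ℤ) = (a : ℤ) - (b : ℤ)) then
      Atilde n (rhoT n - (a : ℤ) • (Pi.single uv.1 1 - Pi.single uv.2 1))
    else 0

/-- `M_{p,D} = Σ Ã_{a,b}` over pairs `(a,b)` of positive integers with
`a·b = p·D` and `p ∣ b` (all such pairs lie in `[1, p·D]²`). -/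
noncomputable def Mpd (n p D : ℕ) : AddMonoidAlgebra ℤ (Fin n → ℤ) :=
  ∑ ab ∈ (Finset.Icc 1 (p * D) ×ˢ Finset.Icc 1 (p * D)).filter
      (fun ab => ab.1 * ab.2 = p * D ∧ p ∣ ab.2),
    AtildeAB n ab.1 ab.2


/-- `D(s) = (|s·p − n| + 1)·s`. -/
def DA (n p s : ℕ) : ℕ := (((s : ℤ) * p - n).natAbs + 1) * s

lemma atilde_swap {n : ℕ} (μ : Fin n → ℤ) {i j : Fin n} (hij : i ≠ j) :
    Atilde n (fun k => μ (Equiv.swap i j k)) = - Atilde n μ := by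
  unfold Atilde
  rw [← Finset.sum_neg_distrib]
  refine Fintype.sum_equiv (Equiv.mulRight (Equiv.swap i j)) _ _ ?_
  intro σ
  have h2 : ((Equiv.Perm.sign (σ * Equiv.swap i j) : ℤ)) = - (Equiv.Perm.sign σ : ℤ) := by
    simp [Equiv.Perm.sign_mul, Equiv.Perm.sign_swap hij]
  simp only [Equiv.coe_mulRight, h2, neg_smul, neg_neg, mul_inv_rev, Equiv.swap_inv,
    Equiv.Perm.mul_apply]

lemma atilde_eq_zero {n : ℕ} (μ : Fin n → ℤ) {i j : Fin n} (hij : i ≠ j) (hμ : μ i = μ j) :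
    Atilde n μ = 0 := by
  unfold Atilde
  refine Finset.sum_involution (fun σ _ => σ * Equiv.swap i j) (fun σ _ => ?_)
    (fun σ _ _ => ?_) (fun _ _ => Finset.mem_univ _) (fun σ _ => ?_)
  · have h1 : (fun k => μ ((σ * Equiv.swap i j)⁻¹ k)) = fun k => μ (σ⁻¹ k) := by
      funext k
      simp only [mul_inv_rev, Equiv.Perm.mul_apply, Equiv.swap_inv]
      rcases eq_or_ne (σ⁻¹ k) i with h | h
      · rw [h, Equiv.swap_apply_left, ← hμ]
      rcases eq_or_ne (σ⁻¹ k) j with h' | h'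
      · rw [h', Equiv.swap_apply_right, hμ]
      · rw [Equiv.swap_apply_of_ne_of_ne h h']
    have h2 : ((Equiv.Perm.sign (σ * Equiv.swap i j) : ℤ)) = - (Equiv.Perm.sign σ : ℤ) := by
      simp [Equiv.Perm.sign_mul, Equiv.Perm.sign_swap hij]
    rw [h1, h2, neg_smul, add_neg_cancel]
  · exact (not_congr Equiv.mul_swap_eq_iff).mpr hij
  · exact Equiv.mul_swap_involutive i j σ

lemma atildeAB_swap (n a b : ℕ) : AtildeAB n b a = - AtildeAB n a b := by
  unfold AtildeAB
  rw [← Finset.sum_neg_distrib]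
  refine Fintype.sum_equiv (Equiv.prodComm _ _) _ _ ?_
  rintro ⟨u, v⟩
  simp only [Equiv.prodComm_apply, Prod.swap_prod_mk]
  show (if u ≠ v ∧ ((v : ℤ) - (u : ℤ) = (b : ℤ) - (a : ℤ)) then _ else 0) =
    -(if v ≠ u ∧ ((u : ℤ) - (v : ℤ) = (a : ℤ) - (b : ℤ)) then
      Atilde n (rhoT n - (a : ℤ) • (Pi.single v 1 - Pi.single u 1)) else 0)
  by_cases hc : u ≠ v ∧ ((v : ℤ) - (u : ℤ) = (b : ℤ) - (a : ℤ))
  · rw [if_pos hc, if_pos ⟨hc.1.symm, by linarith [hc.2]⟩]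
    obtain ⟨huv, hd⟩ := hc
    have hfun : (rhoT n - (b : ℤ) • (Pi.single u 1 - Pi.single v 1) : Fin n → ℤ)
        = fun k => (rhoT n - (a : ℤ) • (Pi.single v 1 - Pi.single u 1) : Fin n → ℤ)
            (Equiv.swap u v k) := by
      funext k
      simp only [rhoT, Pi.sub_apply, Pi.smul_apply, smul_eq_mul, Pi.single_apply]
      rcases eq_or_ne k u with rfl | hku
      · rw [Equiv.swap_apply_left]
        simp only [if_pos rfl, if_neg huv, if_neg huv.symm]
        push_cast
        linarith
      rcases eq_or_ne k v with rfl | hkv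
      · rw [Equiv.swap_apply_right]
        simp only [if_pos rfl, if_neg huv, if_neg huv.symm]
        push_cast
        linarith
      · rw [Equiv.swap_apply_of_ne_of_ne hku hkv]
        simp [hku, hkv]
    rw [hfun, atilde_swap _ huv]
  · rw [if_neg hc, if_neg, neg_zero]
    rintro ⟨h1, h2⟩
    exact hc ⟨h1.symm, by linarith⟩

lemma atildeAB_diag (n a : ℕ) : AtildeAB n a a = 0 := by
  unfold AtildeAB
  refine Finset.sum_eq_zero fun uv _ => ?_
  rw [if_neg]
  rintro ⟨h1, h2⟩
  apply h1
  have : (uv.1 : ℕ) = (uv.2 : ℕ) := by omega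
  exact Fin.ext this

lemma atildeAB_zero_small {n a b : ℕ} (ha : 1 ≤ a) (hb : 1 ≤ b) (hab : a + b ≤ n) :
    AtildeAB n a b = 0 := by
  unfold AtildeAB
  refine Finset.sum_eq_zero fun uv _ => ?_
  split_ifs with h
  · obtain ⟨huv, hd⟩ := h
    set u := uv.1 with hu
    set v := uv.2 with hv
    by_cases hc : (u : ℕ) + a < n
    · refine atilde_eq_zero _ (i := u) (j := ⟨(u : ℕ) + a, hc⟩) ?_ ?_
      · intro hcon
        have := congrArg Fin.val hcon
        simp at this
        omega
      · have hjv : (⟨(u : ℕ) + a, hc⟩ : Fin n) ≠ v := by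
          intro hcon
          have := congrArg (fun x : Fin n => ((x : ℕ) : ℤ)) hcon
          simp at this
          omega
        have hju : (⟨(u : ℕ) + a, hc⟩ : Fin n) ≠ u := by
          intro hcon
          have := congrArg Fin.val hcon
          simp at this
          omega
        simp only [rhoT, Pi.sub_apply, Pi.smul_apply, smul_eq_mul, Pi.single_apply,
          if_pos rfl, if_neg huv, if_neg hju, if_neg hjv]
        push_cast
        ring
    · have hva : a ≤ (v : ℕ) := by
        have h1 := uv.1.isLt
        have h2 := uv.2.isLt
        omega
      have hlt : (v : ℕ) - a < n := by omega
      refine atilde_eq_zero _ (i := v) (j := ⟨(v : ℕ) - a, hlt⟩) ?_ ?_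
      · intro hcon
        have := congrArg Fin.val hcon
        simp at this
        omega
      · have hju : (⟨(v : ℕ) - a, hlt⟩ : Fin n) ≠ u := by
          intro hcon
          have := congrArg (fun x : Fin n => ((x : ℕ) : ℤ)) hcon
          simp at this
          omega
        have hjv : (⟨(v : ℕ) - a, hlt⟩ : Fin n) ≠ v := by
          intro hcon
          have := congrArg Fin.val hcon
          simp at this
          omega
        simp only [rhoT, Pi.sub_apply, Pi.smul_apply, smul_eq_mul, Pi.single_apply,
          if_pos rfl, if_neg huv.symm, if_neg hju, if_neg hjv]
        push_cast [hva]
        ring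
  · rfl

lemma atildeAB_zero_far {n a b : ℕ} (h : (a : ℤ) + n ≤ b ∨ (b : ℤ) + n ≤ a) :
    AtildeAB n a b = 0 := by
  unfold AtildeAB
  refine Finset.sum_eq_zero fun uv _ => ?_
  rw [if_neg]
  rintro ⟨h1, h2⟩
  have hu := uv.1.isLt
  have hv := uv.2.isLt
  omega

lemma DA_cast_le (n p m : ℕ) (hm : (m : ℤ) * p ≤ n) :
    (DA n p m : ℤ) = ((n : ℤ) - m * p + 1) * m := by
  have h0 : ((m : ℤ) * p - n) ≤ 0 := by linarith
  unfold DA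
  push_cast [Int.natCast_natAbs]
  rw [abs_of_nonpos h0]
  ring

lemma DA_cast_ge (n p m : ℕ) (hm : (n : ℤ) ≤ m * p) :
    (DA n p m : ℤ) = ((m : ℤ) * p - n + 1) * m := by
  have h0 : (0 : ℤ) ≤ (m : ℤ) * p - n := by linarith
  unfold DA
  push_cast [Int.natCast_natAbs]
  rw [abs_of_nonneg h0]

set_option maxHeartbeats 1000000 in
lemma DA_min_le (n p : ℕ) (hp : 2 ≤ p) (hpn : p < n) (t : ℕ) (ht : 1 ≤ t) :
    min (DA n p (n / p)) (DA n p ((n + p - 1) / p)) ≤ DA n p t := by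
  have hp0 : 0 < p := by omega
  have hds := Nat.div_add_mod n p
  have hmod := Nat.mod_lt n hp0
  have hds2 := Nat.div_add_mod (n + p - 1) p
  have hmod2 := Nat.mod_lt (n + p - 1) hp0
  set s : ℕ := n / p with hs
  set s2 : ℕ := (n + p - 1) / p with hs2
  have hr1 : p * s ≤ n := by omega
  have hr2 : n < p * s + p := by omega
  have hr3 : n ≤ p * s2 := by omega
  have hr4 : p * s2 ≤ n + p - 1 := by omega
  have hs1 : 1 ≤ s := Nat.one_le_div_iff hp0 |>.mpr (le_of_lt hpn)
  have hs2le : s2 ≤ s + 1 := by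
    have hq : (s + 2) * p = p * s + 2 * p := by ring
    have hlt : n + p - 1 < (s + 2) * p := by omega
    have := (Nat.div_lt_iff_lt_mul hp0).mpr hlt
    omega
  clear hds hds2 hmod hmod2
  -- cast the basic facts to ℤ
  have zr1 : (s : ℤ) * p ≤ n := by
    have := Int.ofNat_le.mpr hr1; push_cast at this; linarith
  have zr2 : (n : ℤ) < s * p + p := by
    have := Int.ofNat_lt.mpr hr2; push_cast at this; linarith
  have zr3 : (n : ℤ) ≤ s2 * p := by
    have := Int.ofNat_le.mpr hr3; push_cast at this; linarith
  have zp0 : (0 : ℤ) < p := by exact_mod_cast hp0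
  rcases le_or_gt t s with hts | hts
  · refine le_trans (min_le_left _ _) ?_
    have hts' : (t : ℤ) ≤ s := by exact_mod_cast hts
    have ht' : (1 : ℤ) ≤ t := by exact_mod_cast ht
    have htp : (t : ℤ) * p ≤ n := by
      have := mul_le_mul_of_nonneg_right hts' (le_of_lt zp0)
      linarith
    have key : (DA n p s : ℤ) ≤ (DA n p t : ℤ) := by
      rw [DA_cast_le n p s zr1, DA_cast_le n p t htp]
      have hf1 : (0 : ℤ) ≤ (s : ℤ) - t := by linarith
      have hf2 : (0 : ℤ) ≤ (t : ℤ) * p + s * p - n - 1 := by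
        have := mul_le_mul_of_nonneg_right ht' (le_of_lt zp0)
        linarith
      nlinarith [mul_nonneg hf1 hf2]
    exact_mod_cast key
  · refine le_trans (min_le_right _ _) ?_
    have hts2 : s2 ≤ t := by omega
    have hts2' : (s2 : ℤ) ≤ t := by exact_mod_cast hts2
    have hs2p : (0 : ℤ) ≤ s2 := by positivity
    have htp : (n : ℤ) ≤ t * p := by
      have := mul_le_mul_of_nonneg_right hts2' (le_of_lt zp0)
      linarith
    have key : (DA n p s2 : ℤ) ≤ (DA n p t : ℤ) := by
      rw [DA_cast_ge n p s2 zr3, DA_cast_ge n p t htp]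
      have hf1 : (0 : ℤ) ≤ (t : ℤ) - s2 := by linarith
      have hf2 : (0 : ℤ) ≤ (t : ℤ) * p + s2 * p - n + 1 := by
        have h0t : (0 : ℤ) ≤ (t : ℤ) * p := by positivity
        linarith
      nlinarith [mul_nonneg hf1 hf2]
    exact_mod_cast key

lemma key_nt (n p D : ℕ) (hn : 2 ≤ n) (hp : 2 ≤ p) (hpn : p < n) (hD : 1 ≤ D)
    (h : (p = 2 ∧ Even n ∧ D < n / 2) ∨
         (p = 2 ∧ Odd n ∧ D < n) ∨
         (n = 5 ∧ p = 3 ∧ D ≤ 3) ∨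
         (n = 8 ∧ p = 3 ∧ D ≤ 5) ∨
         (n = 7 ∧ p = 4 ∧ D ≤ 3) ∨
         (3 ≤ p ∧ ¬(n = 5 ∧ p = 3) ∧ ¬(n = 8 ∧ p = 3) ∧ ¬(n = 7 ∧ p = 4) ∧
           D < min (DA n p (n / p)) (DA n p ((n + p - 1) / p))))
    (a b : ℕ) (ha : 1 ≤ a) (hb : 1 ≤ b) (hab : a * b = p * D)
    (hpb : p ∣ b) (hpa : ¬ p ∣ a) :
    a + b ≤ n ∨ ((a : ℤ) + n ≤ b ∨ (b : ℤ) + n ≤ a) := by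
  by_contra hcon
  push_neg at hcon
  obtain ⟨h1, h2, h3⟩ := hcon
  obtain ⟨t, rfl⟩ := hpb
  have hp0 : 0 < p := by omega
  have ht : 1 ≤ t := by
    rcases Nat.eq_zero_or_pos t with rfl | h
    · omega
    · exact h
  have hat : a * t = D := by
    have h' : p * (a * t) = p * D := by rw [← hab]; ring
    exact Nat.eq_of_mul_eq_mul_left hp0 h'
  set B : ℕ := p * t with hB
  have hBc : (B : ℤ) = (t : ℤ) * p := by rw [hB]; push_cast; ring
  -- the key divisor bound: a ≥ |pt − n| + 1, hence D ≥ DA n p t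
  have hDt : DA n p t ≤ D := by
    have hcg : ((t : ℤ) * p - n).natAbs = ((B : ℤ) - n).natAbs := by rw [hBc]
    calc DA n p t = (((t : ℤ) * p - n).natAbs + 1) * t := rfl
      _ = (((B : ℤ) - n).natAbs + 1) * t := by rw [hcg]
      _ ≤ a * t := Nat.mul_le_mul_right t (by omega)
      _ = D := hat
  rcases h with ⟨hp2, hev, hDlt⟩ | ⟨hp2, hodd, hDlt⟩ | ⟨hn', hp', hDle⟩ |
    ⟨hn', hp', hDle⟩ | ⟨hn', hp', hDle⟩ | ⟨hp3, _, _, _, hDlt⟩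
  · -- p = 2, n even
    obtain ⟨k, hk⟩ := hev
    have hB2 : B = 2 * t := by rw [hB, hp2]
    have hD2 : 2 * D ≤ n - 2 := by omega
    have habz : (a : ℤ) * B = 2 * D := by
      have : a * B = 2 * D := by rw [hab, hp2]
      exact_mod_cast this
    have hA1 : (1 : ℤ) ≤ a := by exact_mod_cast ha
    have hB1 : (1 : ℤ) ≤ B := by
      have : 1 ≤ B := by omega
      exact_mod_cast this
    have hD2z : 2 * (D : ℤ) ≤ (n : ℤ) - 2 := by
      have h2n : 2 ≤ n := hn
      omega
    have hsum : (n : ℤ) < a + B := by exact_mod_cast h1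
    nlinarith [mul_nonneg (by linarith : (0:ℤ) ≤ (a : ℤ) - 1)
      (by linarith : (0:ℤ) ≤ (B : ℤ) - 1)]
  · -- p = 2, n odd
    obtain ⟨m, hm'⟩ := hodd
    have hna : ¬ 2 ∣ a := by rw [← hp2]; exact hpa
    have hB2 : B = 2 * t := by rw [hB, hp2]
    have habz : (a : ℤ) * B = 2 * D := by
      have : a * B = 2 * D := by rw [hab, hp2]
      exact_mod_cast this
    have e1 : (n : ℤ) + 2 ≤ a + B := by omega
    have e2 : (B : ℤ) ≤ a + n - 2 := by omega
    have e3 : (a : ℤ) ≤ B + n - 2 := by omega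
    have hDn : (D : ℤ) ≤ (n : ℤ) - 1 := by omega
    nlinarith [mul_nonneg (by linarith : (0:ℤ) ≤ (a:ℤ) + B - (n+2))
        (by linarith : (0:ℤ) ≤ (a:ℤ) + B + (n+2)),
      mul_nonneg (by linarith : (0:ℤ) ≤ (n:ℤ) - 2 - ((a:ℤ) - B))
        (by linarith : (0:ℤ) ≤ (n:ℤ) - 2 + ((a:ℤ) - B))]
  · -- (n, p) = (5, 3)
    have hB3 : B = 3 * t := by rw [hB, hp']
    have hpa3 : ¬ 3 ∣ a := by rw [← hp']; exact hpa
    have htD : t ≤ D := Nat.le_of_dvd (by omega) ⟨a, by rw [← hat]; ring⟩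
    have ht3 : t ≤ 3 := le_trans htD hDle
    interval_cases t <;> omega
  · -- (n, p) = (8, 3)
    have hB3 : B = 3 * t := by rw [hB, hp']
    have htD : t ≤ D := Nat.le_of_dvd (by omega) ⟨a, by rw [← hat]; ring⟩
    have ht3 : t ≤ 5 := le_trans htD hDle
    interval_cases t <;> omega
  · -- (n, p) = (7, 4)
    have hB3 : B = 4 * t := by rw [hB, hp']
    have htD : t ≤ D := Nat.le_of_dvd (by omega) ⟨a, by rw [← hat]; ring⟩
    have ht3 : t ≤ 3 := le_trans htD hDle
    interval_cases t <;> omega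
  · -- general case
    exact absurd hDlt (not_lt.mpr (le_trans (DA_min_le n p hp hpn t ht) hDt))

/-- Lemma 4.7 of the paper.
Let `n ≥ 2` and `2 ≤ p < n`. Then `M_{p,D} = 0` in each of the situations:
(i) `p = 2`, `n` even, `D < n/2`; (ii) `p = 2`, `n` odd, `D < n`;
(iii) `(n,p) = (5,3)`, `D ≤ 3`; (iv) `(n,p) = (8,3)`, `D ≤ 5`;
(v) `(n,p) = (7,4)`, `D ≤ 3`; (vi) `p ≥ 3`, `(n,p) ∉ {(5,3),(8,3),(7,4)}`, and
`D < min {D(s₁), D(s₂)}` where `s₁ = ⌊n/p⌋`, `s₂ = ⌈n/p⌉`,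
`D(s) = (|s·p − n| + 1)·s`. -/
theorem stmt12 (n p D : ℕ) (hn : 2 ≤ n) (hp : 2 ≤ p) (hpn : p < n) (hD : 1 ≤ D)
    (h : (p = 2 ∧ Even n ∧ D < n / 2) ∨
         (p = 2 ∧ Odd n ∧ D < n) ∨
         (n = 5 ∧ p = 3 ∧ D ≤ 3) ∨
         (n = 8 ∧ p = 3 ∧ D ≤ 5) ∨
         (n = 7 ∧ p = 4 ∧ D ≤ 3) ∨
         (3 ≤ p ∧ ¬(n = 5 ∧ p = 3) ∧ ¬(n = 8 ∧ p = 3) ∧ ¬(n = 7 ∧ p = 4) ∧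
           D < min (DA n p (n / p)) (DA n p ((n + p - 1) / p)))) :
    Mpd n p D = 0 := by
  classical
  unfold Mpd
  rw [← Finset.sum_filter_add_sum_filter_not
    ((Finset.Icc 1 (p * D) ×ˢ Finset.Icc 1 (p * D)).filter
      (fun ab => ab.1 * ab.2 = p * D ∧ p ∣ ab.2)) (fun ab => p ∣ ab.1)]
  have hz1 : ∑ ab ∈ ((Finset.Icc 1 (p * D) ×ˢ Finset.Icc 1 (p * D)).filter
      (fun ab => ab.1 * ab.2 = p * D ∧ p ∣ ab.2)).filter (fun ab => p ∣ ab.1),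
      AtildeAB n ab.1 ab.2 = 0 := by
    refine Finset.sum_involution (fun ab _ => ab.swap) (fun ab _ => ?_)
      (fun ab _ hf => ?_) (fun ab hab => ?_) (fun ab _ => Prod.swap_swap ab)
    · show AtildeAB n ab.1 ab.2 + AtildeAB n ab.2 ab.1 = 0
      rw [atildeAB_swap n ab.1 ab.2, add_neg_cancel]
    · intro hcon
      apply hf
      have h12 : ab.1 = ab.2 := by
        have := congrArg Prod.fst hcon
        simpa using this.symm
      rw [h12]
      exact atildeAB_diag n ab.2
    · simp only [Finset.mem_filter, Finset.mem_product, Finset.mem_Icc] at hab ⊢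
      obtain ⟨⟨⟨⟨ha1, ha2⟩, hb1, hb2⟩, hmul, hdvd⟩, hdvd1⟩ := hab
      exact ⟨⟨⟨⟨hb1, hb2⟩, ha1, ha2⟩, by rw [mul_comm]; exact hmul, hdvd1⟩, hdvd⟩
  have hz2 : ∑ ab ∈ ((Finset.Icc 1 (p * D) ×ˢ Finset.Icc 1 (p * D)).filter
      (fun ab => ab.1 * ab.2 = p * D ∧ p ∣ ab.2)).filter (fun ab => ¬ p ∣ ab.1),
      AtildeAB n ab.1 ab.2 = 0 := by
    refine Finset.sum_eq_zero fun ab hab => ?_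
    simp only [Finset.mem_filter, Finset.mem_product, Finset.mem_Icc] at hab
    obtain ⟨⟨⟨⟨ha1, ha2⟩, hb1, hb2⟩, hmul, hdvd⟩, hnd⟩ := hab
    rcases key_nt n p D hn hp hpn hD h ab.1 ab.2 ha1 hb1 hmul hdvd hnd with hs | hf
    · exact atildeAB_zero_small ha1 hb1 hs
    · exact atildeAB_zero_far hf
  rw [hz1, hz2, add_zero]
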